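/- arXiv:2011.00550 — 5 statements merged into one kernel-verified Lean document; each statement's English description precedes it below -/
import Mathlib

section
/- Let σ > 0 and C ≥ 0 be real constants, let f(x) = 𝟙(x ≥ 0) be the indicator function and g(x) = max{log₂(1 + e^{σC}), 2} − log₂(1 + e^{−σx}). Then f(x) ≤ g(x) for all x ∈ [−C, C]. -/
/-- Lemma 2: for σ > 0 and C ≥ 0, the indicator `𝟙(x ≥ 0)` is bounded above by
`max (log₂ (1 + e^(σ C))) 2 − log₂ (1 + e^(-σ x))` for all `x ∈ [-C, C]`. -/
theorem indicator_le_max_logb_sub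
    (σ C : ℝ) (hσ : 0 < σ) (hC : 0 ≤ C) (x : ℝ) (hx : x ∈ Set.Icc (-C) C) :
    (if 0 ≤ x then (1 : ℝ) else 0) ≤
      max (Real.logb 2 (1 + Real.exp (σ * C))) 2 - Real.logb 2 (1 + Real.exp (-σ * x)) := by
  obtain ⟨hx1, hx2⟩ := hx
  by_cases h : 0 ≤ x
  · rw [if_pos h]
    have hlog : Real.logb 2 (1 + Real.exp (-σ * x)) ≤ 1 := by
      have : (1 : ℝ) + Real.exp (-σ * x) ≤ 2 := by
        have : Real.exp (-σ * x) ≤ 1 := by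
          rw [Real.exp_le_one_iff]
          nlinarith
        linarith
      calc Real.logb 2 (1 + Real.exp (-σ * x)) ≤ Real.logb 2 2 :=
            Real.logb_le_logb_of_le (by norm_num) (by positivity) this
        _ = 1 := Real.logb_self_eq_one (by norm_num)
    have : (2 : ℝ) ≤ max (Real.logb 2 (1 + Real.exp (σ * C))) 2 := le_max_right _ _
    linarith
  · rw [if_neg h]
    have hlog : Real.logb 2 (1 + Real.exp (-σ * x)) ≤
        Real.logb 2 (1 + Real.exp (σ * C)) := by
      apply Real.logb_le_logb_of_le (by norm_num) (by positivity)
      have : Real.exp (-σ * x) ≤ Real.exp (σ * C) := by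
        apply Real.exp_le_exp.mpr
        nlinarith
      linarith
    have := le_max_left (Real.logb 2 (1 + Real.exp (σ * C))) 2
    linarith
end

section
/- Assume the utility u(i, k) is monotonically decreasing in the position k for each item i, and that the ranking scores satisfy |s_i| ≤ C for all items i, where C ≥ 0 and σ > 0. Let C₁ = max{log₂(1 + e^{2σC}), 2} and C₂ = C₁ · ∑_{j=1}^{n} ∑_{i : k(j) < k(i)} (u(j, k(j)) − u(j, k(i))). Then L''(s) ≤ L'(s) + C₂. -/
open Finset

lemma urank_pointwise (σ C si sj a b : ℝ) (hσ : 0 < σ) (hC : 0 ≤ C)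
    (hsi : |si| ≤ C) (hsj : |sj| ≤ C) (ha : 0 ≤ a) (hb : 0 ≤ b) :
    (if si < sj then a else 0) + (if sj < si then b else 0) ≤
      (a - b) * Real.logb 2 (1 + Real.exp (-σ * (si - sj))) +
      (max (Real.logb 2 (1 + Real.exp (2 * σ * C))) 2) * b := by
  have h12 : (1 : ℝ) < 2 := one_lt_two
  set ℓ := Real.logb 2 (1 + Real.exp (-σ * (si - sj))) with hℓ
  have hexppos : 0 < Real.exp (-σ * (si - sj)) := Real.exp_pos _
  have hℓ0 : 0 ≤ ℓ := Real.logb_nonneg h12 (by linarith)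
  have hC₁2 : (2 : ℝ) ≤ max (Real.logb 2 (1 + Real.exp (2 * σ * C))) 2 := le_max_right _ _
  have habs_i := abs_le.1 hsi
  have habs_j := abs_le.1 hsj
  rcases lt_trichotomy si sj with h | h | h
  · rw [if_pos h, if_neg (not_lt.2 h.le)]
    have hℓ1 : 1 ≤ ℓ := by
      have hexp1 : (1 : ℝ) ≤ Real.exp (-σ * (si - sj)) :=
        Real.one_le_exp (by nlinarith)
      have h2 : Real.logb 2 2 ≤ ℓ :=
        Real.logb_le_logb_of_le h12 two_pos (by linarith)
      rw [Real.logb_self_eq_one h12] at h2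
      exact h2
    have hℓC : ℓ ≤ max (Real.logb 2 (1 + Real.exp (2 * σ * C))) 2 := by
      refine le_trans ?_ (le_max_left _ _)
      apply Real.logb_le_logb_of_le h12 (by linarith)
      have : Real.exp (-σ * (si - sj)) ≤ Real.exp (2 * σ * C) :=
        Real.exp_le_exp.2 (by nlinarith)
      linarith
    nlinarith [mul_nonneg ha (sub_nonneg.2 hℓ1), mul_nonneg hb (sub_nonneg.2 hℓC)]
  · rw [if_neg (by simp [h]), if_neg (by simp [h])]
    have : ℓ = 1 := by
      rw [hℓ, h, sub_self, mul_zero, Real.exp_zero]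
      norm_num
    rw [this]
    nlinarith
  · rw [if_neg (not_lt.2 h.le), if_pos h]
    have hℓ1 : ℓ ≤ 1 := by
      have hexp1 : Real.exp (-σ * (si - sj)) ≤ 1 := Real.exp_le_one_iff.2 (by nlinarith)
      have h2 : ℓ ≤ Real.logb 2 2 :=
        Real.logb_le_logb_of_le h12 (by linarith) (by linarith)
      rw [Real.logb_self_eq_one h12] at h2
      exact h2
    nlinarith [mul_nonneg ha hℓ0, mul_nonneg hb (sub_nonneg.2 hℓ1)]

/-- Theorem 1: if the utility `u i k` is antitone in the position `k` and the
ranking scores are bounded by `C`, then `L'' ≤ L' + C₂` where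
`C₂ = C₁ · ∑_j ∑_{i : k j < k i} (u j (k j) − u j (k i))` and
`C₁ = max (log₂(1 + e^(2σC))) 2`. -/
theorem urank_Lpp_le_Lp_add_const
    {n : ℕ} (u : Fin n → Fin n → ℝ) (hu : ∀ i, Antitone (u i))
    (k : Equiv.Perm (Fin n)) (s : Fin n → ℝ)
    (σ C : ℝ) (hσ : 0 < σ) (hC : 0 ≤ C) (hs : ∀ i, |s i| ≤ C) :
    (∑ i, ∑ j ∈ univ.filter (fun j => s i < s j), |u i (k j) - u i (k i)|) ≤
      (∑ i, ∑ j ∈ univ.filter (fun j => k j < k i),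
        (u i (k j) + u j (k i) - u i (k i) - u j (k j)) *
          Real.logb 2 (1 + Real.exp (-σ * (s i - s j))))
      + (max (Real.logb 2 (1 + Real.exp (2 * σ * C))) 2) *
          (∑ j, ∑ i ∈ univ.filter (fun i => k j < k i), (u j (k j) - u j (k i))) := by
  classical
  set C₁ := max (Real.logb 2 (1 + Real.exp (2 * σ * C))) 2 with hC₁
  set F : Fin n → Fin n → ℝ := fun i j => if s i < s j then |u i (k j) - u i (k i)| else 0
    with hF
  -- rewrite the LHS as a paired sum over (i,j) with k j < k i
  have hLHS : (∑ i, ∑ j ∈ univ.filter (fun j => s i < s j), |u i (k j) - u i (k i)|)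
      = ∑ i, ∑ j, (if k j < k i then F i j + F j i else 0) := by
    have step1 : ∀ i j : Fin n,
        F i j = (if k j < k i then F i j else 0) + (if k i < k j then F i j else 0) := by
      intro i j
      rcases lt_trichotomy (k j) (k i) with h | h | h
      · rw [if_pos h, if_neg (not_lt.2 h.le), add_zero]
      · have hij : i = j := k.injective h.symm
        subst hij
        simp [hF]
      · rw [if_neg (not_lt.2 h.le), if_pos h, zero_add]
    calc (∑ i, ∑ j ∈ univ.filter (fun j => s i < s j), |u i (k j) - u i (k i)|)
        = ∑ i, ∑ j, F i j := by
          simp only [sum_filter, hF]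
      _ = ∑ i, ∑ j, ((if k j < k i then F i j else 0) + (if k i < k j then F i j else 0)) := by
          simp only [← step1]
      _ = (∑ i, ∑ j, (if k j < k i then F i j else 0))
            + ∑ i, ∑ j, (if k i < k j then F i j else 0) := by
          rw [← sum_add_distrib]
          exact Finset.sum_congr rfl fun i _ => sum_add_distrib
      _ = (∑ i, ∑ j, (if k j < k i then F i j else 0))
            + ∑ i, ∑ j, (if k j < k i then F j i else 0) := by
          rw [Finset.sum_comm (f := fun i j => if k i < k j then F i j else 0)]
      _ = ∑ i, ∑ j, (if k j < k i then F i j + F j i else 0) := by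
          rw [← sum_add_distrib]
          refine Finset.sum_congr rfl fun i _ => ?_
          rw [← sum_add_distrib]
          refine Finset.sum_congr rfl fun j _ => ?_
          split <;> simp
  -- rewrite the RHS similarly
  have hRHS : ((∑ i, ∑ j ∈ univ.filter (fun j => k j < k i),
        (u i (k j) + u j (k i) - u i (k i) - u j (k j)) *
          Real.logb 2 (1 + Real.exp (-σ * (s i - s j))))
      + C₁ * (∑ j, ∑ i ∈ univ.filter (fun i => k j < k i), (u j (k j) - u j (k i))))
      = ∑ i, ∑ j, (if k j < k i then
          (u i (k j) + u j (k i) - u i (k i) - u j (k j)) *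
            Real.logb 2 (1 + Real.exp (-σ * (s i - s j)))
          + C₁ * (u j (k j) - u j (k i)) else 0) := by
    have hswap : (∑ j, ∑ i ∈ univ.filter (fun i => k j < k i), (u j (k j) - u j (k i)))
        = ∑ i, ∑ j, (if k j < k i then (u j (k j) - u j (k i)) else 0) := by
      simp only [sum_filter]
      exact Finset.sum_comm
    rw [hswap, Finset.mul_sum]
    simp only [Finset.mul_sum, mul_ite, mul_zero, sum_filter]
    rw [← sum_add_distrib]
    refine Finset.sum_congr rfl fun i _ => ?_
    rw [← sum_add_distrib]
    refine Finset.sum_congr rfl fun j _ => ?_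
    split <;> simp
  rw [hLHS, hRHS]
  refine Finset.sum_le_sum fun i _ => Finset.sum_le_sum fun j _ => ?_
  by_cases hk : k j < k i
  · rw [if_pos hk, if_pos hk]
    have ha : 0 ≤ u i (k j) - u i (k i) := sub_nonneg.2 (hu i hk.le)
    have hb : 0 ≤ u j (k j) - u j (k i) := sub_nonneg.2 (hu j hk.le)
    have hFij : F i j = (if s i < s j then (u i (k j) - u i (k i)) else 0) := by
      simp only [hF, abs_of_nonneg ha]
    have hFji : F j i = (if s j < s i then (u j (k j) - u j (k i)) else 0) := by
      simp only [hF]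
      rw [abs_sub_comm, abs_of_nonneg hb]
    rw [hFij, hFji]
    have := urank_pointwise σ C (s i) (s j) (u i (k j) - u i (k i)) (u j (k j) - u j (k i))
      hσ hC (hs i) (hs j) ha hb
    calc _ ≤ _ := this
    _ = _ := by ring
  · rw [if_neg hk, if_neg hk]
end

section
/- Assume the utility u(i, k) is monotonically decreasing in the position k for each item i, and that the ranking k is induced by sorting the scores in descending order, i.e., for all items i, j one has k(j) < k(i) if and only if s_i < s_j. Then for every permutation k⋆ : Fin n ≃ Fin n, the utility regret satisfies ∑_{i=1}^{n} u(i, k⋆(i)) − ∑_{i=1}^{n} u(i, k(i)) ≤ L''(s). -/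
open Finset

/-- Theorem 2: if the utility `u i k` is antitone in the position `k` and the
ranking `k` sorts the scores in descending order, then the utility regret with
respect to any assignment `k⋆` is bounded above by `L''(s)`. -/
theorem urank_regret_le_Lpp
    {n : ℕ} (u : Fin n → Fin n → ℝ) (hu : ∀ i, Antitone (u i))
    (k : Equiv.Perm (Fin n)) (s : Fin n → ℝ)
    (hks : ∀ i j, k j < k i ↔ s i < s j)
    (kstar : Equiv.Perm (Fin n)) :
    (∑ i, u i (kstar i)) - (∑ i, u i (k i)) ≤
      ∑ i, ∑ j ∈ univ.filter (fun j => s i < s j), |u i (k j) - u i (k i)| := by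
  rw [← Finset.sum_sub_distrib]
  apply Finset.sum_le_sum
  intro i _
  by_cases h : kstar i < k i
  · set j := k.symm (kstar i) with hj
    have hkj : k j = kstar i := k.apply_symm_apply _
    have hlt : k j < k i := by rw [hkj]; exact h
    have hs : s i < s j := (hks i j).mp hlt
    have hmem : j ∈ univ.filter (fun j => s i < s j) := by
      simp [hs]
    have habs : u i (kstar i) - u i (k i) ≤ |u i (k j) - u i (k i)| := by
      rw [hkj]; exact le_abs_self _
    refine habs.trans ?_
    exact Finset.single_le_sum (f := fun x => |u i (k x) - u i (k i)|) (fun x _ => abs_nonneg _) hmem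
  · have : u i (kstar i) ≤ u i (k i) := hu i (not_lt.mp h)
    have h0 : u i (kstar i) - u i (k i) ≤ 0 := by linarith
    exact h0.trans (Finset.sum_nonneg fun x _ => abs_nonneg _)
end

section
/- Assume the utility u(i, k) is monotonically decreasing in the position k for each item i, the ranking scores satisfy |s_i| ≤ C for all items i with C ≥ 0 and σ > 0, and the ranking k is induced by sorting the scores in descending order, i.e., for all items i, j one has k(j) < k(i) if and only if s_i < s_j. Let C₁ = max{log₂(1 + e^{2σC}), 2} and C₂ = C₁ · ∑_{j=1}^{n} ∑_{i : k(j) < k(i)} (u(j, k(j)) − u(j, k(i))). Then for every permutation k⋆ : Fin n ≃ Fin n, the utility regret satisfies ∑_{i=1}^{n} u(i, k⋆(i)) − ∑_{i=1}^{n} u(i, k(i)) ≤ L'(s) + C₂. -/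
open Finset

/-- Theorem 3: under the assumptions of Theorems 1 and 2, the utility regret is
bounded above by `L'(s) + C₂`. -/
theorem urank_regret_le_Lp_add_const
    {n : ℕ} (u : Fin n → Fin n → ℝ) (hu : ∀ i, Antitone (u i))
    (k : Equiv.Perm (Fin n)) (s : Fin n → ℝ)
    (σ C : ℝ) (hσ : 0 < σ) (hC : 0 ≤ C) (hs : ∀ i, |s i| ≤ C)
    (hks : ∀ i j, k j < k i ↔ s i < s j)
    (kstar : Equiv.Perm (Fin n)) :
    (∑ i, u i (kstar i)) - (∑ i, u i (k i)) ≤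
      (∑ i, ∑ j ∈ univ.filter (fun j => k j < k i),
        (u i (k j) + u j (k i) - u i (k i) - u j (k j)) *
          Real.logb 2 (1 + Real.exp (-σ * (s i - s j))))
      + (max (Real.logb 2 (1 + Real.exp (2 * σ * C))) 2) *
          (∑ j, ∑ i ∈ univ.filter (fun i => k j < k i), (u j (k j) - u j (k i))) := by
  set C₁ : ℝ := max (Real.logb 2 (1 + Real.exp (2 * σ * C))) 2 with hC₁
  set lam : Fin n → Fin n → ℝ :=
    fun i j => Real.logb 2 (1 + Real.exp (-σ * (s i - s j))) with hlam
  -- bounds on the logistic weight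
  have hlow : ∀ i j, k j < k i → 1 ≤ lam i j := by
    intro i j hij
    have hsij : s i < s j := (hks i j).1 hij
    have h1 : (1:ℝ) < Real.exp (-σ * (s i - s j)) := by
      rw [Real.one_lt_exp_iff]; nlinarith
    have h2 : (2:ℝ) ≤ 1 + Real.exp (-σ * (s i - s j)) := by linarith
    calc (1:ℝ) = Real.logb 2 2 := (Real.logb_self_eq_one (by norm_num)).symm
      _ ≤ lam i j := Real.logb_le_logb_of_le (by norm_num) (by norm_num) h2
  have hhigh : ∀ i j, k j < k i → lam i j ≤ C₁ := by
    intro i j hij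
    have h1 : -σ * (s i - s j) ≤ 2 * σ * C := by
      have hi := abs_le.1 (hs i); have hj := abs_le.1 (hs j)
      nlinarith
    have h2 : Real.exp (-σ * (s i - s j)) ≤ Real.exp (2 * σ * C) := Real.exp_le_exp.2 h1
    have h3 : lam i j ≤ Real.logb 2 (1 + Real.exp (2 * σ * C)) :=
      Real.logb_le_logb_of_le (by norm_num)
        (by positivity) (by linarith)
    exact h3.trans (le_max_left _ _)
  -- pointwise key inequality
  have key : ∀ i j, k j < k i →
      u i (k j) - u i (k i) ≤
        (u i (k j) + u j (k i) - u i (k i) - u j (k j)) * lam i j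
          + C₁ * (u j (k j) - u j (k i)) := by
    intro i j hij
    have hA : 0 ≤ u i (k j) - u i (k i) := by
      have := hu i hij.le; linarith
    have hB : 0 ≤ u j (k j) - u j (k i) := by
      have := hu j hij.le; linarith
    have h1 := hlow i j hij
    have h2 := hhigh i j hij
    nlinarith [mul_nonneg hA (by linarith : (0:ℝ) ≤ lam i j - 1),
      mul_nonneg hB (by linarith : (0:ℝ) ≤ C₁ - lam i j)]
  -- Step 1: regret ≤ sum of A terms
  have step1 : (∑ i, u i (kstar i)) - (∑ i, u i (k i)) ≤
      ∑ i, ∑ j ∈ univ.filter (fun j => k j < k i), (u i (k j) - u i (k i)) := by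
    rw [← Finset.sum_sub_distrib]
    refine Finset.sum_le_sum (fun i _ => ?_)
    have hre : ∑ j ∈ univ.filter (fun j => k j < k i), (u i (k j) - u i (k i))
        = ∑ p ∈ univ.filter (fun p => p < k i), (u i p - u i (k i)) := by
      refine Finset.sum_equiv k (fun j => ?_) (fun j _ => rfl)
      simp
    rw [hre]
    have hnonneg : ∀ p ∈ univ.filter (fun p => p < k i), 0 ≤ u i p - u i (k i) := by
      intro p hp
      have hp' : p < k i := (Finset.mem_filter.1 hp).2
      have := hu i hp'.le; linarith
    rcases lt_or_ge (kstar i) (k i) with h | h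
    · have hmem : kstar i ∈ univ.filter (fun p => p < k i) := by simp [h]
      exact Finset.single_le_sum hnonneg hmem
    · have h1 : u i (kstar i) ≤ u i (k i) := hu i h
      have h2 : 0 ≤ ∑ p ∈ univ.filter (fun p => p < k i), (u i p - u i (k i)) :=
        Finset.sum_nonneg hnonneg
      linarith
  -- Step 2: sum of A terms ≤ L' + C₁ * (sum of B terms)
  have step2 : ∑ i, ∑ j ∈ univ.filter (fun j => k j < k i), (u i (k j) - u i (k i)) ≤
      (∑ i, ∑ j ∈ univ.filter (fun j => k j < k i),
        (u i (k j) + u j (k i) - u i (k i) - u j (k j)) * lam i j)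
      + C₁ * ∑ i, ∑ j ∈ univ.filter (fun j => k j < k i), (u j (k j) - u j (k i)) := by
    rw [Finset.mul_sum, ← Finset.sum_add_distrib]
    refine Finset.sum_le_sum (fun i _ => ?_)
    rw [Finset.mul_sum, ← Finset.sum_add_distrib]
    refine Finset.sum_le_sum (fun j hj => ?_)
    exact key i j (Finset.mem_filter.1 hj).2
  -- Step 3: reindex the B sum
  have swap : ∑ i, ∑ j ∈ univ.filter (fun j => k j < k i), (u j (k j) - u j (k i))
      = ∑ j, ∑ i ∈ univ.filter (fun i => k j < k i), (u j (k j) - u j (k i)) := by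
    simp_rw [Finset.sum_filter]
    exact Finset.sum_comm
  rw [swap] at step2
  exact step1.trans step2
end

section
/- Let n ≥ 1. Assume the utility u(i, k) is monotonically decreasing in the position k for each item i, and that the ranking k is induced by sorting the scores in descending order, i.e., for all items i, j one has k(j) < k(i) if and only if s_i < s_j. Then L''(s) ≥ ∑_{i=1}^{n} u(i, 1) − ∑_{i=1}^{n} u(i, k(i)), where 1 denotes the top position. -/
open Finset

/-- The key inequality in the proof of Theorem 2: `L''(s)` is bounded below by
`∑ i u(i, 1) − ∑ i u(i, k i)` where `1` denotes the top position. -/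
theorem urank_Lpp_ge_top_regret
    {n : ℕ} (hn : 0 < n)
    (u : Fin n → Fin n → ℝ) (hu : ∀ i, Antitone (u i))
    (k : Equiv.Perm (Fin n)) (s : Fin n → ℝ)
    (hks : ∀ i j, k j < k i ↔ s i < s j) :
    (∑ i, u i (⟨0, hn⟩ : Fin n)) - (∑ i, u i (k i)) ≤
      ∑ i, ∑ j ∈ univ.filter (fun j => s i < s j), |u i (k j) - u i (k i)| := by
  rw [← Finset.sum_sub_distrib]
  apply Finset.sum_le_sum
  intro i _
  have hfil : univ.filter (fun j => s i < s j) = univ.filter (fun j => k j < k i) := by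
    apply Finset.filter_congr
    intro j _
    simp [← hks i j]
  rw [hfil]
  by_cases h : k i = ⟨0, hn⟩
  · rw [h]
    have : (univ.filter (fun j => k j < (⟨0, hn⟩ : Fin n))) = ∅ := by
      apply Finset.filter_false_of_mem
      intro j _
      exact not_lt_of_ge (Fin.mk_le_of_le_val (Nat.zero_le _))
    rw [this]
    simp
  · have hle : (⟨0, hn⟩ : Fin n) ≤ k i := Fin.mk_le_of_le_val (Nat.zero_le _)
    have hlt : (⟨0, hn⟩ : Fin n) < k i := lt_of_le_of_ne hle (fun e => h e.symm)
    have hmem : k.symm ⟨0, hn⟩ ∈ univ.filter (fun j => k j < k i) := by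
      simp [Equiv.apply_symm_apply, hlt]
    calc u i ⟨0, hn⟩ - u i (k i)
        ≤ |u i (k (k.symm ⟨0, hn⟩)) - u i (k i)| := by
          rw [Equiv.apply_symm_apply]; exact le_abs_self _
      _ ≤ ∑ j ∈ univ.filter (fun j => k j < k i), |u i (k j) - u i (k i)| :=
          Finset.single_le_sum (f := fun j => |u i (k j) - u i (k i)|) (fun j _ => abs_nonneg _) hmem
end
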